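/- Correctness of the largest-divisible-subset recurrence: let A be a strictly increasing finite sequence of positive integers of length n. Call S ⊆ {1,...,n} divisible if for all indices x,y ∈ S, A[x] divides A[y] or A[y] divides A[x]. Define L(i) as the maximum cardinality of a divisible subset whose maximum index is i. Then L(i) = 1 if no j < i has A[j] dividing A[i], and otherwise L(i) = 1 + max{ L(j) : j < i and A[j] divides A[i] }. -/
import Mathlib


open Finset

/-- Correctness of the largest-divisible-subset recurrence.  Let `A` be strictly
increasing on `{1,…,n}` with positive values.  A set `S ⊆ {1,…,n}` of indices is
divisible if every pair of its values is comparable under divisibility.  With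
`L i` the maximum cardinality of a divisible subset whose maximum index is `i`:
`L i = 1` if no `j < i` has `A j ∣ A i`, and otherwise
`L i = 1 + max { L j : j < i, A j ∣ A i }`. -/
theorem largest_divisible_subset_recurrence
    (n : ℕ) (A : ℕ → ℕ)
    (hmono : StrictMonoOn A (Set.Icc 1 n)) (hpos : ∀ i ∈ Set.Icc 1 n, 0 < A i)
    (L : ℕ → ℕ)
    (hL : ∀ i ∈ Set.Icc 1 n, L i = sSup {m : ℕ | ∃ S : Finset ℕ,
      S ⊆ Finset.Icc 1 n ∧ i ∈ S ∧ (∀ x ∈ S, x ≤ i) ∧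
      (∀ x ∈ S, ∀ y ∈ S, A x ∣ A y ∨ A y ∣ A x) ∧ m = S.card}) :
    ∀ i ∈ Set.Icc 1 n,
      ((¬ ∃ j, 1 ≤ j ∧ j < i ∧ A j ∣ A i) → L i = 1) ∧
      ((∃ j, 1 ≤ j ∧ j < i ∧ A j ∣ A i) →
        L i = 1 + sSup {m : ℕ | ∃ j, 1 ≤ j ∧ j < i ∧ A j ∣ A i ∧ m = L j}) := by
  -- abbreviation for the candidate sets
  set Mset : ℕ → Set ℕ := fun k => {m : ℕ | ∃ S : Finset ℕ,
      S ⊆ Finset.Icc 1 n ∧ k ∈ S ∧ (∀ x ∈ S, x ≤ k) ∧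
      (∀ x ∈ S, ∀ y ∈ S, A x ∣ A y ∨ A y ∣ A x) ∧ m = S.card} with hMset
  have hLM : ∀ k ∈ Set.Icc 1 n, L k = sSup (Mset k) := hL
  -- divisibility goes upward
  have hdiv : ∀ x ∈ Set.Icc 1 n, ∀ y ∈ Set.Icc 1 n, x < y →
      (A x ∣ A y ∨ A y ∣ A x) → A x ∣ A y := by
    intro x hx y hy hxy h
    rcases h with h | h
    · exact h
    · have hlt : A x < A y := hmono hx hy hxy
      have := Nat.le_of_dvd (hpos x hx) h
      omega
  -- bound on Mset
  have hub : ∀ k, ∀ m ∈ Mset k, m ≤ n := by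
    rintro k m ⟨S, hS, -, -, -, rfl⟩
    calc S.card ≤ (Finset.Icc 1 n).card := Finset.card_le_card hS
      _ = n := by simp
  have hbdd : ∀ k, BddAbove (Mset k) := fun k => ⟨n, fun m hm => hub k m hm⟩
  -- 1 is always achieved
  have hmem1 : ∀ k ∈ Set.Icc 1 n, (1 : ℕ) ∈ Mset k := by
    intro k hk
    refine ⟨{k}, ?_, Finset.mem_singleton_self k, ?_, ?_, by simp⟩
    · simp [Finset.singleton_subset_iff, Finset.mem_Icc, hk.1, hk.2]
    · intro x hx; simp at hx; omega
    · intro x hx y hy; simp at hx hy; subst hx; subst hy; left; rfl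
  have hne : ∀ k ∈ Set.Icc 1 n, (Mset k).Nonempty := fun k hk => ⟨1, hmem1 k hk⟩
  have hLge1 : ∀ k ∈ Set.Icc 1 n, 1 ≤ L k := by
    intro k hk
    rw [hLM k hk]
    exact le_csSup (hbdd k) (hmem1 k hk)
  have hLmem : ∀ k ∈ Set.Icc 1 n, L k ∈ Mset k := by
    intro k hk
    rw [hLM k hk]
    exact Nat.sSup_mem (hne k hk) (hbdd k)
  -- every element of a divisible set divides the value at the max index
  have hdivmax : ∀ S : Finset ℕ, S ⊆ Finset.Icc 1 n → ∀ j ∈ S, (∀ x ∈ S, x ≤ j) →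
      (∀ x ∈ S, ∀ y ∈ S, A x ∣ A y ∨ A y ∣ A x) → ∀ x ∈ S, A x ∣ A j := by
    intro S hS j hj hjmax hcomp x hx
    rcases eq_or_lt_of_le (hjmax x hx) with h | h
    · rw [h]
    · have hx' : x ∈ Set.Icc 1 n := by have := hS hx; simp [Finset.mem_Icc] at this; exact this
      have hj' : j ∈ Set.Icc 1 n := by have := hS hj; simp [Finset.mem_Icc] at this; exact this
      exact hdiv x hx' j hj' h (hcomp x hx j hj)
  intro i hi
  have hi1 : 1 ≤ i := hi.1
  have hin : i ≤ n := hi.2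
  constructor
  · -- no predecessor divides A i
    intro hno
    obtain ⟨S, hS, hiS, hmax, hcomp, hcard⟩ := hLmem i hi
    have hSeq : S = {i} := by
      apply Finset.eq_singleton_iff_unique_mem.mpr
      refine ⟨hiS, fun x hx => ?_⟩
      by_contra hxi
      have hxlt : x < i := lt_of_le_of_ne (hmax x hx) hxi
      have hx' : x ∈ Set.Icc 1 n := by have := hS hx; simp [Finset.mem_Icc] at this; exact this
      have hxd : A x ∣ A i := hdiv x hx' i hi hxlt (hcomp x hx i hiS)
      exact hno ⟨x, hx'.1, hxlt, hxd⟩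
    rw [hcard, hSeq, Finset.card_singleton]
  · -- there is a predecessor dividing A i
    intro hex
    set T : Set ℕ := {m : ℕ | ∃ j, 1 ≤ j ∧ j < i ∧ A j ∣ A i ∧ m = L j} with hT
    have hTub : ∀ m ∈ T, m ≤ n := by
      rintro m ⟨j, hj1, hji, hjd, rfl⟩
      have hj' : j ∈ Set.Icc 1 n := ⟨hj1, by omega⟩
      obtain ⟨S, hS, -, -, -, hcard⟩ := hLmem j hj'
      rw [hcard]
      calc S.card ≤ (Finset.Icc 1 n).card := Finset.card_le_card hS
        _ = n := by simp
    have hTbdd : BddAbove T := ⟨n, fun m hm => hTub m hm⟩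
    obtain ⟨j₀, hj₀1, hj₀i, hj₀d⟩ := hex
    have hTne : T.Nonempty := ⟨L j₀, j₀, hj₀1, hj₀i, hj₀d, rfl⟩
    -- sSup T attained
    obtain ⟨j, hj1, hji, hjd, hjL⟩ := Nat.sSup_mem hTne hTbdd
    have hj' : j ∈ Set.Icc 1 n := ⟨hj1, by omega⟩
    apply le_antisymm
    · -- L i ≤ 1 + sSup T
      obtain ⟨S, hS, hiS, hmax, hcomp, hcard⟩ := hLmem i hi
      by_cases hSeq : S = {i}
      · rw [hcard, hSeq, Finset.card_singleton]
        have : 1 ≤ sSup T := by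
          calc 1 ≤ L j₀ := hLge1 j₀ ⟨hj₀1, by omega⟩
            _ ≤ sSup T := le_csSup hTbdd ⟨j₀, hj₀1, hj₀i, hj₀d, rfl⟩
        omega
      · set S' := S.erase i with hS'
        have hS'ne : S'.Nonempty := by
          rcases Finset.eq_empty_or_nonempty S' with h | h
          · exfalso; apply hSeq
            apply Finset.eq_singleton_iff_unique_mem.mpr
            refine ⟨hiS, fun x hx => ?_⟩
            by_contra hxi
            have : x ∈ S' := Finset.mem_erase.mpr ⟨hxi, hx⟩
            simp [h] at this
          · exact h
        set k := S'.max' hS'ne with hk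
        have hkS' : k ∈ S' := S'.max'_mem hS'ne
        have hkS : k ∈ S := Finset.mem_of_mem_erase hkS'
        have hkne : k ≠ i := (Finset.mem_erase.mp hkS').1
        have hki : k < i := lt_of_le_of_ne (hmax k hkS) hkne
        have hk' : k ∈ Set.Icc 1 n := by have := hS hkS; simp [Finset.mem_Icc] at this; exact this
        have hkd : A k ∣ A i := hdiv k hk' i hi hki (hcomp k hkS i hiS)
        have hS'sub : S' ⊆ Finset.Icc 1 n := (Finset.erase_subset _ _).trans hS
        have hS'max : ∀ x ∈ S', x ≤ k := fun x hx => S'.le_max' x hx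
        have hS'comp : ∀ x ∈ S', ∀ y ∈ S', A x ∣ A y ∨ A y ∣ A x :=
          fun x hx y hy => hcomp x (Finset.mem_of_mem_erase hx) y (Finset.mem_of_mem_erase hy)
        have hcardmem : S'.card ∈ Mset k := ⟨S', hS'sub, hkS', hS'max, hS'comp, rfl⟩
        have hLk : S'.card ≤ L k := by
          rw [hLM k hk']
          exact le_csSup (hbdd k) hcardmem
        have hLkT : L k ≤ sSup T := le_csSup hTbdd ⟨k, hk'.1, hki, hkd, rfl⟩
        have hScard : S.card = S'.card + 1 := by
          rw [hS']
          rw [Finset.card_erase_of_mem hiS]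
          have : 1 ≤ S.card := Finset.card_pos.mpr ⟨i, hiS⟩
          omega
        omega
    · -- 1 + sSup T ≤ L i
      obtain ⟨S, hS, hjS, hmax, hcomp, hcard⟩ := hLmem j hj'
      have hiS : i ∉ S := fun h => absurd (hmax i h) (by omega)
      set S'' := insert i S with hS''
      have hdall : ∀ x ∈ S, A x ∣ A i :=
        fun x hx => (hdivmax S hS j hjS hmax hcomp x hx).trans hjd
      have hmem : S''.card ∈ Mset i := by
        refine ⟨S'', ?_, Finset.mem_insert_self i S, ?_, ?_, rfl⟩
        · intro x hx
          rcases Finset.mem_insert.mp hx with h | h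
          · subst h; simp [Finset.mem_Icc]; omega
          · exact hS h
        · intro x hx
          rcases Finset.mem_insert.mp hx with h | h
          · omega
          · have := hmax x h; omega
        · intro x hx y hy
          rcases Finset.mem_insert.mp hx with h | h <;>
            rcases Finset.mem_insert.mp hy with h' | h'
          · subst h; subst h'; left; rfl
          · subst h; right; exact hdall y h'
          · subst h'; left; exact hdall x h
          · exact hcomp x h y h'
      have hcard'' : S''.card = S.card + 1 := Finset.card_insert_of_notMem hiS
      have : S''.card ≤ L i := by
        rw [hLM i hi]; exact le_csSup (hbdd i) hmem
      omega
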